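/- If a finite point set P in the plane in general position satisfies Necessary Condition 3 (i.e., |P'| - |CH(P')| >= |CH(P)| - max|T_c'|), then P also satisfies Necessary Condition 1 (|P'| >= |CH(P)|) and Necessary Condition 2 (for every set S of consecutive vertices of CH(P), the convex hull of P \ S has at most |P'| + 1 vertices). -/

import Mathlib

open scoped Classical

noncomputable section

/-- Points of the plane. -/
abbrev Pt : Type := ℝ × ℝ

/-- Orientation determinant of two plane vectors. -/
def det2 (u v : Pt) : ℝ := u.1 * v.2 - u.2 * v.1

/-- `P` is in general position: no three distinct points of `P` are collinear. -/
def GenPos (P : Finset Pt) : Prop :=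
  ∀ p ∈ P, ∀ q ∈ P, ∀ r ∈ P, p ≠ q → p ≠ r → q ≠ r → ¬Collinear ℝ ({p, q, r} : Set Pt)

/-- The vertices of the convex hull of `P` (the extreme points of `P`). -/
def hullVx (P : Finset Pt) : Finset Pt :=
  P.filter fun p => p ∉ convexHull ℝ ((P.erase p : Finset Pt) : Set Pt)

/-- The points of `P` lying in the interior of the convex hull of `P`. -/
def intPts (P : Finset Pt) : Finset Pt :=
  P.filter fun p => p ∈ interior (convexHull ℝ (P : Set Pt))

/-- `p` and `q` are consecutive vertices of the convex hull of `P`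
(the segment joining them is an edge of the hull boundary). -/
def HullEdge (P : Finset Pt) (p q : Pt) : Prop :=
  p ∈ hullVx P ∧ q ∈ hullVx P ∧ p ≠ q ∧
    segment ℝ p q ⊆ frontier (convexHull ℝ (P : Set Pt))

/-- A plane graph with vertex set `P`, all of whose edges are straight line
segments: edges may only meet at common endpoints. -/
structure PlaneGraph (P : Finset Pt) where
  Adj : Pt → Pt → Prop
  symm : ∀ {p q}, Adj p q → Adj q p
  mem_left : ∀ {p q}, Adj p q → p ∈ P
  ne : ∀ {p q}, Adj p q → p ≠ q
  noncross : ∀ {p q r s}, Adj p q → Adj r s →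
    (openSegment ℝ p q ∩ openSegment ℝ r s).Nonempty → ({p, q} : Set Pt) = {r, s}

/-- A triangulation of `P`: a plane straight-line graph on `P` that is maximal,
i.e. no further segment between points of `P` can be added without crossing an
existing edge.  (For a finite point set in general position this is equivalent
to: the outer face is the complement of the convex hull and every bounded face
is a triangle.) -/
structure Triangulation (P : Finset Pt) extends PlaneGraph P where
  maximal : ∀ p ∈ P, ∀ q ∈ P, p ≠ q → ¬Adj p q →
    ∃ r s, Adj r s ∧ ({p, q} : Set Pt) ≠ {r, s} ∧
      (openSegment ℝ p q ∩ openSegment ℝ r s).Nonempty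

/-- The abstract graph underlying a plane graph. -/
def PlaneGraph.graph {P : Finset Pt} (G : PlaneGraph P) : SimpleGraph {x // x ∈ P} where
  Adj p q := G.Adj p q
  symm := ⟨fun _ _ h => G.symm h⟩
  loopless := ⟨fun _ h => G.ne h rfl⟩

/-- A graph is `k`-connected if it has at least `k+1` vertices and no set of at
most `k-1` vertices disconnects it (removing fewer than `k` vertices leaves a
connected graph). -/
def KConnected {V : Type*} [Fintype V] (G : SimpleGraph V) (k : ℕ) : Prop :=
  k + 1 ≤ Fintype.card V ∧
    ∀ S : Finset V, S.card < k → (G.induce ((↑S : Set V)ᶜ)).Connected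

/-- A chord of a plane graph on `P`: an edge joining two nonconsecutive
vertices of the convex hull of `P`. -/
def IsChord {P : Finset Pt} (G : PlaneGraph P) (p q : Pt) : Prop :=
  G.Adj p q ∧ p ∈ hullVx P ∧ q ∈ hullVx P ∧ ¬HullEdge P p q

/-- Three points forming a triangle of the graph `G` (pairwise adjacent). -/
def IsTriangleOf {P : Finset Pt} (G : PlaneGraph P) (p q r : Pt) : Prop :=
  G.Adj p q ∧ G.Adj q r ∧ G.Adj p r

/-- A complex triangle of `G`: a triangle formed by three edges of `G` that
contains a point of `P` in its interior and another point of `P` in its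
exterior. -/
def IsComplexTri {P : Finset Pt} (G : PlaneGraph P) (p q r : Pt) : Prop :=
  IsTriangleOf G p q r ∧
    (∃ x ∈ P, x ∈ interior (convexHull ℝ ({p, q, r} : Set Pt))) ∧
    (∃ y ∈ P, y ∉ convexHull ℝ ({p, q, r} : Set Pt))

/-- A triangulation is noncomplex if it has neither chords nor complex
triangles. -/
def Noncomplex {P : Finset Pt} (T : Triangulation P) : Prop :=
  (∀ p q, ¬IsChord T.toPlaneGraph p q) ∧ ∀ p q r, ¬IsComplexTri T.toPlaneGraph p q r

/-- `Q` is anomalous: its convex hull is a triangle and there is a hull vertex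
`p` such that every point of `Q \ {p}` lies on the boundary of the convex hull
of `Q \ {p}`. -/
def Anomalous (Q : Finset Pt) : Prop :=
  (hullVx Q).card = 3 ∧
    ∃ p ∈ hullVx Q, ∀ q ∈ Q.erase p,
      q ∉ interior (convexHull ℝ ((Q.erase p : Finset Pt) : Set Pt))

/-- `s` is a vertex of the convex hull of `P` lying strictly between `pr` and
`pt` in counterclockwise order (i.e. on the open counterclockwise hull arc
from `pr` to `pt`; for a hull traversed counterclockwise these are exactly the
hull vertices strictly on the right of the directed chord `pr → pt`). -/
def CCWBetween (P : Finset Pt) (pr pt s : Pt) : Prop :=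
  s ∈ hullVx P ∧ det2 (pt - pr) (s - pr) < 0

/-- The set `S` of hull vertices strictly between `pr` and `pt`
counterclockwise. -/
def cutSet (P : Finset Pt) (pr pt : Pt) : Finset Pt :=
  P.filter fun s => CCWBetween P pr pt s

/-- An inward triangle of a plane graph `G` on `P`: a triangle of `G` two of
whose vertices `b`, `c` are consecutive hull vertices and whose third vertex
`a` (its inward vertex) is an interior point of the hull. -/
def InwardTri {P : Finset Pt} (G : PlaneGraph P) (b c a : Pt) : Prop :=
  IsTriangleOf G b c a ∧ HullEdge P b c ∧ a ∈ intPts P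

/-- A (geometric) inward triangle of the point set `P`: its base `b c` is an
edge of the hull and its inward vertex `a` is an interior point. -/
def GInwardTri (P : Finset Pt) (b c a : Pt) : Prop :=
  HullEdge P b c ∧ a ∈ intPts P

/-- The triangle `b c a` contains no point of `P` in its interior. -/
def EmptyTri (P : Finset Pt) (b c a : Pt) : Prop :=
  ∀ x ∈ P, x ∉ interior (convexHull ℝ ({b, c, a} : Set Pt))

/-- The inward triangle `b c a` is forbidden: for some hull vertices `pr ≠ pt`,
its base edge lies on the clockwise hull chain from `pr` to `pt` (i.e. `b`, `c`
are not strictly counterclockwise between `pr` and `pt`) while its inward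
vertex lies on the boundary of the convex hull of `Q = P \ S`. -/
def ForbiddenTri (P : Finset Pt) (b c a : Pt) : Prop :=
  ∃ pr ∈ hullVx P, ∃ pt ∈ hullVx P, pr ≠ pt ∧
    b ∉ cutSet P pr pt ∧ c ∉ cutSet P pr pt ∧
    a ∉ interior (convexHull ℝ ((P \ cutSet P pr pt : Finset Pt) : Set Pt))

/-- A triangle, recorded as `(b, c, a)` with base `b c` and inward vertex `a`. -/
abbrev Tri : Type := Pt × Pt × Pt

def triVerts (t : Tri) : Set Pt := {t.1, t.2.1, t.2.2}

def triInterior (t : Tri) : Set Pt := interior (convexHull ℝ (triVerts t))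

/-- A non-forbidden empty inward triangle of `P`. -/
def GoodTri (P : Finset Pt) (t : Tri) : Prop :=
  GInwardTri P t.1 t.2.1 t.2.2 ∧ EmptyTri P t.1 t.2.1 t.2.2 ∧
    ¬ForbiddenTri P t.1 t.2.1 t.2.2

/-- Two triangles share an edge (i.e. share two distinct vertices). -/
def ShareEdge (t₁ t₂ : Tri) : Prop :=
  ∃ u v : Pt, u ≠ v ∧ u ∈ triVerts t₁ ∧ v ∈ triVerts t₁ ∧
    u ∈ triVerts t₂ ∧ v ∈ triVerts t₂

/-- A compatible set of triangles: all its members are non-forbidden empty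
inward triangles, and no two (distinct) members share an edge, an inward
vertex, or an interior point. -/
def Compatible (P : Finset Pt) (Tc : Finset Tri) : Prop :=
  (∀ t ∈ Tc, GoodTri P t) ∧
    ∀ t₁ ∈ Tc, ∀ t₂ ∈ Tc, triVerts t₁ ≠ triVerts t₂ →
      ¬ShareEdge t₁ t₂ ∧ t₁.2.2 ≠ t₂.2.2 ∧ triInterior t₁ ∩ triInterior t₂ = ∅

/-- A maximal compatible set: no inward triangle can be added while keeping it
compatible. -/
def MaxCompatible (P : Finset Pt) (Tc : Finset Tri) : Prop :=
  Compatible P Tc ∧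
    ∀ t : Tri, Compatible P (insert t Tc) → ∃ t' ∈ Tc, triVerts t' = triVerts t

/-- The number of triangles of `Tc` whose inward vertex is a vertex of the
convex hull of `P'` (counted up to the underlying vertex set). -/
def tcPrimeCard (P : Finset Pt) (Tc : Finset Tri) : ℕ :=
  ((Tc.filter fun t => t.2.2 ∈ hullVx (intPts P)).image triVerts).card

/-- `max|T_c'|`: the maximum, over all maximal compatible sets `T_c`, of the
number of triangles of `T_c` whose inward vertex is a hull vertex of `P'`. -/
noncomputable def maxTcPrime (P : Finset Pt) : ℕ :=
  sSup {m | ∃ Tc : Finset Tri, MaxCompatible P Tc ∧ m = tcPrimeCard P Tc}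

section AuxLemmas

lemma exists_smul_of_det2 {u v : Pt} (hu : u ≠ 0) (h : det2 u v = 0) : ∃ t : ℝ, v = t • u := by
  rcases eq_or_ne u.1 0 with h1 | h1
  · have h2 : u.2 ≠ 0 := by
      intro h2; exact hu (Prod.ext h1 h2)
    refine ⟨v.2 / u.2, ?_⟩
    have : u.1 * v.2 - u.2 * v.1 = 0 := h
    apply Prod.ext <;> simp only [Prod.smul_fst, Prod.smul_snd, smul_eq_mul] <;> field_simp <;> nlinarith
  · refine ⟨v.1 / u.1, ?_⟩
    have : u.1 * v.2 - u.2 * v.1 = 0 := h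
    apply Prod.ext <;> simp only [Prod.smul_fst, Prod.smul_snd, smul_eq_mul] <;> field_simp <;> nlinarith

lemma collinear_of_det2 {p q r : Pt} (h : det2 (q - p) (r - p) = 0) :
    Collinear ℝ ({p, q, r} : Set Pt) := by
  rcases eq_or_ne q p with h | hq
  · subst h
    have he : ({q, q, r} : Set Pt) = {q, r} := by simp
    rw [he]; exact collinear_pair ℝ q r
  · obtain ⟨t, ht⟩ := exists_smul_of_det2 (sub_ne_zero.mpr hq) h
    rw [collinear_iff_of_mem (Set.mem_insert p _)]
    refine ⟨q - p, ?_⟩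
    rintro x (rfl | rfl | rfl)
    · exact ⟨0, by simp⟩
    · exact ⟨1, by simp⟩
    · exact ⟨t, by rw [← ht]; simp⟩

lemma genpos_det_ne {P : Finset Pt} (hgp : GenPos P) {p q r : Pt} (hp : p ∈ P) (hq : q ∈ P)
    (hr : r ∈ P) (h1 : p ≠ q) (h2 : p ≠ r) (h3 : q ≠ r) : det2 (q - p) (r - p) ≠ 0 :=
  fun h => hgp p hp q hq r hr h1 h2 h3 (collinear_of_det2 h)

lemma combo3_mem {x y z : Pt} {a b c : ℝ} (ha : 0 ≤ a) (hb : 0 ≤ b) (hc : 0 ≤ c)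
    (habc : a + b + c = 1) : a • x + b • y + c • z ∈ convexHull ℝ ({x, y, z} : Set Pt) := by
  have hK : Convex ℝ (convexHull ℝ ({x, y, z} : Set Pt)) := convex_convexHull ℝ _
  have hx : x ∈ convexHull ℝ ({x, y, z} : Set Pt) := subset_convexHull ℝ _ (by simp)
  have hy : y ∈ convexHull ℝ ({x, y, z} : Set Pt) := subset_convexHull ℝ _ (by simp)
  have hz : z ∈ convexHull ℝ ({x, y, z} : Set Pt) := subset_convexHull ℝ _ (by simp)
  rcases eq_or_lt_of_le (add_nonneg hb hc) with h0 | h0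
  · have hb0 : b = 0 := by linarith [hb, hc]
    have hc0 : c = 0 := by linarith
    have ha1 : a = 1 := by linarith
    simpa [hb0, hc0, ha1] using hx
  · have hq : (b / (b + c)) • y + (c / (b + c)) • z ∈ convexHull ℝ ({x, y, z} : Set Pt) :=
      hK hy hz (div_nonneg hb h0.le) (div_nonneg hc h0.le) (by field_simp)
    have := hK hx hq ha (add_nonneg hb hc) (by linarith)
    have heq : a • x + (b + c) • ((b / (b + c)) • y + (c / (b + c)) • z)
        = a • x + b • y + c • z := by
      rw [smul_add, smul_smul, smul_smul]
      rw [mul_div_cancel₀ _ h0.ne', mul_div_cancel₀ _ h0.ne', add_assoc]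
    rwa [heq] at this

lemma abs_det2_le (w v : Pt) : |det2 w v| ≤ ‖w‖ * (|v.1| + |v.2|) := by
  have h1 : |w.1| ≤ ‖w‖ := by simpa [Real.norm_eq_abs] using norm_fst_le w
  have h2 : |w.2| ≤ ‖w‖ := by simpa [Real.norm_eq_abs] using norm_snd_le w
  have e : det2 w v = w.1 * v.2 - w.2 * v.1 := rfl
  rw [e]
  have t1 : |w.1 * v.2 - w.2 * v.1| ≤ |w.1| * |v.2| + |w.2| * |v.1| :=
    (abs_sub _ _).trans_eq (by rw [abs_mul, abs_mul])
  nlinarith [abs_nonneg v.1, abs_nonneg v.2, norm_nonneg w]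

lemma triangle_interior_mem {x y z : Pt} (hd : det2 (x - z) (y - z) ≠ 0)
    {a b c : ℝ} (ha : 0 < a) (hb : 0 < b) (hc : 0 < c) (habc : a + b + c = 1) :
    a • x + b • y + c • z ∈ interior (convexHull ℝ ({x, y, z} : Set Pt)) := by
  obtain ⟨u, hu⟩ : ∃ u : Pt, u = x - z := ⟨_, rfl⟩
  obtain ⟨v, hv⟩ : ∃ v : Pt, v = y - z := ⟨_, rfl⟩
  have hDne : det2 u v ≠ 0 := by rw [hu, hv]; exact hd
  have hDpos : 0 < |det2 u v| := abs_pos.mpr hDne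
  obtain ⟨Cv, hCv⟩ : ∃ t : ℝ, t = (|v.1| + |v.2|) / |det2 u v| := ⟨_, rfl⟩
  obtain ⟨Cu, hCu⟩ : ∃ t : ℝ, t = (|u.1| + |u.2|) / |det2 u v| := ⟨_, rfl⟩
  have hCv0 : 0 ≤ Cv := by rw [hCv]; positivity
  have hCu0 : 0 ≤ Cu := by rw [hCu]; positivity
  obtain ⟨M, hM⟩ : ∃ t : ℝ, t = min a (min b c) := ⟨_, rfl⟩
  have hM0 : 0 < M := by rw [hM]; exact lt_min ha (lt_min hb hc)
  have hMa : M ≤ a := by rw [hM]; exact min_le_left _ _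
  have hMb : M ≤ b := by rw [hM]; exact (min_le_right _ _).trans (min_le_left _ _)
  have hMc : M ≤ c := by rw [hM]; exact (min_le_right _ _).trans (min_le_right _ _)
  obtain ⟨ε, hε⟩ : ∃ t : ℝ, t = M / (Cu + Cv + 1) := ⟨_, rfl⟩
  have hε0 : 0 < ε := by rw [hε]; exact div_pos hM0 (by linarith)
  refine mem_interior.2 ⟨Metric.ball (a • x + b • y + c • z) ε, ?_, Metric.isOpen_ball,
    Metric.mem_ball_self hε0⟩
  intro q hq
  obtain ⟨w, hw⟩ : ∃ w : Pt, w = q - (a • x + b • y + c • z) := ⟨_, rfl⟩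
  have hwn : ‖w‖ < ε := by
    rw [hw, ← dist_eq_norm]; exact Metric.mem_ball.mp hq
  obtain ⟨δ₁, hδ₁⟩ : ∃ t : ℝ, t = det2 w v / det2 u v := ⟨_, rfl⟩
  obtain ⟨δ₂, hδ₂⟩ : ∃ t : ℝ, t = det2 u w / det2 u v := ⟨_, rfl⟩
  have habs1 : |δ₁| ≤ ‖w‖ * Cv := by
    rw [hδ₁, abs_div, hCv, ← mul_div_assoc]
    gcongr
    exact abs_det2_le w v
  have habs2 : |δ₂| ≤ ‖w‖ * Cu := by
    rw [hδ₂, abs_div, hCu, ← mul_div_assoc]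
    gcongr
    have e1 : det2 u w = -det2 w u := by simp [det2]; ring
    rw [e1, abs_neg]
    exact abs_det2_le w u
  have hδsum : |δ₁| + |δ₂| < M := by
    have h3 : ‖w‖ * (Cu + Cv + 1) < ε * (Cu + Cv + 1) :=
      mul_lt_mul_of_pos_right hwn (by linarith)
    have h4 : ε * (Cu + Cv + 1) = M := by
      rw [hε]; field_simp
    nlinarith [norm_nonneg w]
  have hd1 : |δ₁| < M := by nlinarith [abs_nonneg δ₂]
  have hd2 : |δ₂| < M := by nlinarith [abs_nonneg δ₁]
  have hrec : δ₁ • u + δ₂ • v = w := by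
    have e1 : det2 w v = w.1 * v.2 - w.2 * v.1 := rfl
    have e2 : det2 u w = u.1 * w.2 - u.2 * w.1 := rfl
    have e3 : det2 u v = u.1 * v.2 - u.2 * v.1 := rfl
    have hD' : u.1 * v.2 - u.2 * v.1 ≠ 0 := by rw [← e3]; exact hDne
    apply Prod.ext
    · show δ₁ * u.1 + δ₂ * v.1 = w.1
      rw [hδ₁, hδ₂, e1, e2, e3, div_mul_eq_mul_div, div_mul_eq_mul_div, ← add_div, div_eq_iff hD']; ring
    · show δ₁ * u.2 + δ₂ * v.2 = w.2
      rw [hδ₁, hδ₂, e1, e2, e3, div_mul_eq_mul_div, div_mul_eq_mul_div, ← add_div, div_eq_iff hD']; ring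
  have hqe : q = (a + δ₁) • x + (b + δ₂) • y + (c - δ₁ - δ₂) • z := by
    have h5 : q = (a • x + b • y + c • z) + (δ₁ • (x - z) + δ₂ • (y - z)) := by
      rw [← hu, ← hv, hrec, hw]; abel
    rw [h5]; module
  have a1 := le_abs_self δ₁
  have a2 := le_abs_self δ₂
  have b1 := neg_abs_le δ₁
  have b2 := neg_abs_le δ₂
  rw [hqe]
  exact combo3_mem (by linarith) (by linarith) (by linarith) (by linarith)

lemma mem_convexHull_erase_of_mem_interior (Q : Finset Pt) {p : Pt}
    (h : p ∈ interior (convexHull ℝ (Q : Set Pt))) :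
    p ∈ convexHull ℝ ((Q.erase p : Finset Pt) : Set Pt) := by
  by_cases hpQ : p ∈ Q
  · rcases (Q.erase p).eq_empty_or_nonempty with he | ⟨y, hy⟩
    · exfalso
      have hQsub : (Q : Set Pt) ⊆ {p} := by
        intro q hq
        by_contra hne
        exact (Finset.ne_empty_of_mem (Finset.mem_erase.mpr ⟨hne, hq⟩)) he
      have h1 : interior (convexHull ℝ (Q : Set Pt)) ⊆ interior ({p} : Set Pt) :=
        interior_mono (by simpa using convexHull_min hQsub (convex_singleton (𝕜 := ℝ) p))
      have h2 : interior ({p} : Set Pt) = ∅ :=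
        interior_eq_empty_iff_dense_compl.mpr (dense_compl_singleton p)
      exact absurd (h1 h) (by simp [h2])
    · have hyne : y ≠ p := (Finset.mem_erase.mp hy).1
      have hyK : y ∈ convexHull ℝ ((Q.erase p : Finset Pt) : Set Pt) :=
        subset_convexHull ℝ _ (by exact_mod_cast hy)
      obtain ⟨ε, hε0, hball⟩ : ∃ ε > 0, Metric.ball p ε ⊆ convexHull ℝ (Q : Set Pt) := by
        rw [mem_interior_iff_mem_nhds] at h
        exact Metric.mem_nhds_iff.mp h
      obtain ⟨t, ht⟩ : ∃ t : ℝ, t = ε / (2 * (‖p - y‖ + 1)) := ⟨_, rfl⟩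
      have ht0 : 0 < t := by rw [ht]; positivity
      have hwball : p + t • (p - y) ∈ Metric.ball p ε := by
        rw [Metric.mem_ball, dist_eq_norm]
        have e : p + t • (p - y) - p = t • (p - y) := by abel
        rw [e, norm_smul, Real.norm_eq_abs, abs_of_pos ht0, ht]
        rw [div_mul_eq_mul_div, div_lt_iff₀ (by positivity)]
        nlinarith [norm_nonneg (p - y), hε0]
      have hwQ : p + t • (p - y) ∈ convexHull ℝ (Q : Set Pt) := hball hwball
      have hQeq : (Q : Set Pt) = insert p ((Q.erase p : Finset Pt) : Set Pt) := by
        rw [← Finset.coe_insert, Finset.insert_erase hpQ]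
      rw [hQeq, convexHull_insert ⟨y, by exact_mod_cast hy⟩] at hwQ
      rw [mem_convexJoin] at hwQ
      obtain ⟨p', hp', z, hz, hseg⟩ := hwQ
      rw [Set.mem_singleton_iff] at hp'
      obtain ⟨α, β, hα, hβ, hαβ, heq⟩ := hseg
      rw [hp'] at heq
      rcases eq_or_lt_of_le hβ with hβ0 | hβ0
      · exfalso
        have hα1 : α = 1 := by linarith
        rw [hα1, ← hβ0] at heq
        simp only [one_smul, zero_smul, add_zero] at heq
        have h5 : t • (p - y) = 0 := by
          have e2 := congrArg (fun w => w - p) heq.symm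
          simpa using e2
        have h6 : p - y = 0 := by
          rcases smul_eq_zero.mp h5 with h | h
          · exact absurd h (ne_of_gt ht0)
          · exact h
        exact hyne (sub_eq_zero.mp h6).symm
      · have htβ : 0 < t + β := by linarith
        have hα' : α = 1 - β := by linarith
        rw [hα'] at heq
        have h6 : β • z = p + t • (p - y) - (1 - β) • p := by rw [← heq]; abel
        have h7 : (t + β) • p = t • y + β • z := by rw [h6]; module
        have h9 : (t + β)⁻¹ • ((t + β) • p) = (t + β)⁻¹ • (t • y + β • z) :=
          congrArg (fun w => (t + β)⁻¹ • w) h7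
        rw [smul_smul, inv_mul_cancel₀ htβ.ne', one_smul, smul_add, smul_smul, smul_smul] at h9
        have h8 : p = (t / (t + β)) • y + (β / (t + β)) • z := by
          rw [div_eq_inv_mul, div_eq_inv_mul]; exact h9
        have hmem : (t / (t + β)) • y + (β / (t + β)) • z ∈
            convexHull ℝ ((Q.erase p : Finset Pt) : Set Pt) :=
          (convex_convexHull ℝ _) hyK hz (div_nonneg ht0.le htβ.le) (div_nonneg hβ htβ.le)
            (by rw [← add_div, div_self htβ.ne'])
        rw [← h8] at hmem
        exact hmem
  · rw [Finset.erase_eq_of_notMem hpQ]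
    exact interior_subset h

lemma seg_collinear {q r p : Pt} {α β : ℝ} (hαβ : α + β = 1) (heq : α • q + β • r = p) :
    Collinear ℝ ({q, r, p} : Set Pt) := by
  apply collinear_of_det2
  have hpq : p - q = β • (r - q) := by
    rw [← heq]; have : α = 1 - β := by linarith
    rw [this]; module
  rw [hpq]
  have : det2 (r - q) (β • (r - q)) = β * det2 (r - q) (r - q) := by
    simp [det2]; ring
  rw [this]
  have : det2 (r - q) (r - q) = 0 := by simp [det2]; ring
  rw [this]; ring

lemma mem_intPts_of_not_hullVx {P : Finset Pt} (hgp : GenPos P) {p : Pt} (hp : p ∈ P)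
    (hnv : p ∉ hullVx P) : p ∈ intPts P := by
  have hmem : p ∈ convexHull ℝ ((P.erase p : Finset Pt) : Set Pt) := by
    by_contra hcon
    exact hnv (Finset.mem_filter.mpr ⟨hp, hcon⟩)
  rw [convexHull_eq_union] at hmem
  simp only [Set.mem_iUnion] at hmem
  obtain ⟨t, htsub, haff, hmem⟩ := hmem
  have hcard : t.card ≤ 3 := by
    have h1 := haff.card_le_finrank_succ
    have h2 := le_trans h1 (Nat.add_le_add_right (Submodule.finrank_le _) 1)
    simp only [Fintype.card_coe] at h2
    have h3 : Module.finrank ℝ Pt = 2 := by simp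
    rw [h3] at h2
    exact h2
  have htP : ∀ q ∈ t, q ∈ P.erase p := fun q hq => by exact_mod_cast htsub hq
  -- helper to refute p in a segment of two points of P.erase p
  have hseg2 : ∀ q ∈ P.erase p, ∀ r ∈ P.erase p, q ≠ r →
      ∀ α β : ℝ, α + β = 1 → α • q + β • r = p → False := by
    intro q hq r hr hqr α β hαβ heq
    have hqP := Finset.mem_of_mem_erase hq
    have hrP := Finset.mem_of_mem_erase hr
    have hqp := Finset.ne_of_mem_erase hq
    have hrp := Finset.ne_of_mem_erase hr
    exact hgp q hqP r hrP p hp hqr hqp hrp (seg_collinear hαβ heq)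
  interval_cases hc : t.card
  · rw [Finset.card_eq_zero] at hc
    subst hc; simp at hmem
  · rw [Finset.card_eq_one] at hc
    obtain ⟨q, rfl⟩ := hc
    simp only [Finset.coe_singleton, convexHull_singleton, Set.mem_singleton_iff] at hmem
    exact absurd hmem.symm (Finset.ne_of_mem_erase (htP q (by simp)))
  · rw [Finset.card_eq_two] at hc
    obtain ⟨q, r, hqr, rfl⟩ := hc
    have hco : (({q, r} : Finset Pt) : Set Pt) = {q, r} := by simp
    rw [hco, convexHull_pair] at hmem
    obtain ⟨α, β, hα, hβ, hαβ, heq⟩ := hmem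
    exact absurd heq (by
      intro heq
      exact hseg2 q (htP q (by simp)) r (htP r (by simp)) hqr α β hαβ heq)
  · rw [Finset.card_eq_three] at hc
    obtain ⟨x, y, z, hxy, hxz, hyz, rfl⟩ := hc
    rw [Finset.convexHull_eq] at hmem
    obtain ⟨w, hw0, hw1, hwc⟩ := hmem
    have hsum1 : w x + w y + w z = 1 := by
      rw [Finset.sum_insert (by simp [hxy, hxz]), Finset.sum_insert (by simp [hyz]),
        Finset.sum_singleton] at hw1
      linarith
    have hcm : w x • x + w y • y + w z • z = p := by
      rw [Finset.centerMass_eq_of_sum_1 _ _ hw1] at hwc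
      rw [Finset.sum_insert (by simp [hxy, hxz]), Finset.sum_insert (by simp [hyz]),
        Finset.sum_singleton] at hwc
      simpa [add_assoc] using hwc
    have hx0 : 0 ≤ w x := hw0 x (by simp)
    have hy0 : 0 ≤ w y := hw0 y (by simp)
    have hz0 : 0 ≤ w z := hw0 z (by simp)
    have hxm := htP x (by simp)
    have hym := htP y (by simp)
    have hzm := htP z (by simp)
    rcases eq_or_lt_of_le hx0 with hx | hx
    · exact absurd hcm (by
        intro hcm
        refine hseg2 y hym z hzm hyz (w y) (w z) (by linarith) ?_
        rw [← hcm, ← hx]; module)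
    · rcases eq_or_lt_of_le hy0 with hy | hy
      · exact absurd hcm (by
          intro hcm
          refine hseg2 x hxm z hzm hxz (w x) (w z) (by linarith) ?_
          rw [← hcm, ← hy]; module)
      · rcases eq_or_lt_of_le hz0 with hz | hz
        · exact absurd hcm (by
            intro hcm
            refine hseg2 x hxm y hym hxy (w x) (w y) (by linarith) ?_
            rw [← hcm, ← hz]; module)
        · have hdet : det2 (x - z) (y - z) ≠ 0 := by
            have := genpos_det_ne hgp (Finset.mem_of_mem_erase hzm)
              (Finset.mem_of_mem_erase hxm) (Finset.mem_of_mem_erase hym)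
              (Ne.symm hxz) (Ne.symm hyz) hxy
            exact this
          have hint : p ∈ interior (convexHull ℝ ({x, y, z} : Set Pt)) := by
            rw [← hcm]
            exact triangle_interior_mem hdet hx hy hz hsum1
          have hsub : ({x, y, z} : Set Pt) ⊆ (P : Set Pt) := by
            intro q hq
            rcases hq with rfl | rfl | rfl
            · exact_mod_cast Finset.mem_of_mem_erase hxm
            · exact_mod_cast Finset.mem_of_mem_erase hym
            · exact_mod_cast Finset.mem_of_mem_erase hzm
          exact Finset.mem_filter.mpr ⟨hp, interior_mono (convexHull_mono hsub) hint⟩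

lemma det2_add_smul (u v w : Pt) (α β : ℝ) :
    det2 u (α • v + β • w) = α * det2 u v + β * det2 u w := by
  simp [det2]; ring

lemma det2_cycle (b c y : Pt) : det2 (b - y) (c - y) = det2 (c - b) (y - b) := by
  simp [det2]; ring

lemma hullVx_mem_P {P : Finset Pt} {p : Pt} (h : p ∈ hullVx P) : p ∈ P :=
  (Finset.mem_filter.mp h).1

lemma hulledge_side {P : Finset Pt} (hgp : GenPos P) {b c : Pt} (he : HullEdge P b c) :
    (∀ x ∈ P, 0 ≤ det2 (c - b) (x - b)) ∨ (∀ x ∈ P, det2 (c - b) (x - b) ≤ 0) := by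
  obtain ⟨hbv, hcv, hbc, hfr⟩ := he
  have hbP := hullVx_mem_P hbv
  have hcP := hullVx_mem_P hcv
  have hcb : c - b ≠ 0 := sub_ne_zero.mpr (Ne.symm hbc)
  by_contra hcon
  push_neg at hcon
  obtain ⟨⟨x, hxP, hxlt⟩, ⟨y, hyP, hygt⟩⟩ := hcon
  -- interior points of the two triangles
  have hKconv : Convex ℝ (convexHull ℝ (P : Set Pt)) := convex_convexHull ℝ _
  have hmk : ∀ w : Pt, w ∈ P → det2 (c - b) (w - b) ≠ 0 →
      ∃ z : Pt, z ∈ interior (convexHull ℝ (P : Set Pt)) ∧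
        det2 (c - b) (z - b) = (1/3) * det2 (c - b) (w - b) := by
    intro w hwP hdw
    refine ⟨(1/3 : ℝ) • b + (1/3 : ℝ) • c + (1/3 : ℝ) • w, ?_, ?_⟩
    · have hd2 : det2 (b - w) (c - w) ≠ 0 := by rw [det2_cycle]; exact hdw
      have := triangle_interior_mem hd2 (by norm_num) (by norm_num) (by norm_num)
        (by norm_num : (1/3 : ℝ) + 1/3 + 1/3 = 1)
      refine interior_mono (convexHull_mono ?_) this
      intro q hq
      rcases hq with rfl | rfl | rfl
      · exact_mod_cast hbP
      · exact_mod_cast hcP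
      · exact_mod_cast hwP
    · have e : (1/3 : ℝ) • b + (1/3 : ℝ) • c + (1/3 : ℝ) • w - b
          = (1/3 : ℝ) • (c - b) + (1/3 : ℝ) • (w - b) := by module
      rw [e, det2_add_smul]
      have : det2 (c - b) (c - b) = 0 := by simp [det2]; ring
      rw [this]; ring
  obtain ⟨z₁, hz₁i, hz₁d⟩ := hmk y hyP (ne_of_gt hygt)
  obtain ⟨z₂, hz₂i, hz₂d⟩ := hmk x hxP (ne_of_lt hxlt)
  have hA : 0 < det2 (c - b) (z₁ - b) := by rw [hz₁d]; linarith
  have hB : det2 (c - b) (z₂ - b) < 0 := by rw [hz₂d]; linarith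
  obtain ⟨θ, hθdef⟩ : ∃ t : ℝ, t = det2 (c - b) (z₁ - b) /
      (det2 (c - b) (z₁ - b) - det2 (c - b) (z₂ - b)) := ⟨_, rfl⟩
  have hAB : 0 < det2 (c - b) (z₁ - b) - det2 (c - b) (z₂ - b) := by linarith
  have hθ0 : 0 < θ := by rw [hθdef]; positivity
  have hθ1 : θ < 1 := by
    rw [hθdef, div_lt_one hAB]; linarith
  obtain ⟨zs, hzs⟩ : ∃ z : Pt, z = (1 - θ) • z₁ + θ • z₂ := ⟨_, rfl⟩
  have hzsi : zs ∈ interior (convexHull ℝ (P : Set Pt)) := by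
    rw [hzs]
    exact hKconv.combo_interior_self_mem_interior hz₁i (interior_subset hz₂i)
      (by linarith) hθ0.le (by ring)
  have hdzs : det2 (c - b) (zs - b) = 0 := by
    have e : zs - b = (1 - θ) • (z₁ - b) + θ • (z₂ - b) := by rw [hzs]; module
    rw [e, det2_add_smul, hθdef]
    field_simp
    ring
  obtain ⟨μ, hμ⟩ := exists_smul_of_det2 hcb hdzs
  have hz' : zs = b + μ • (c - b) := by rw [← hμ]; abel
  have hfoi : ∀ w, w ∈ segment ℝ b c → w ∉ interior (convexHull ℝ (P : Set Pt)) := by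
    intro w hw
    exact (hfr hw).2
  rcases le_or_gt 0 μ with hμ0 | hμ0
  · rcases le_or_gt μ 1 with hμ1 | hμ1
    · -- zs on the segment
      refine hfoi zs ⟨1 - μ, μ, by linarith, hμ0, by ring, ?_⟩ hzsi
      rw [hz']; module
    · -- μ > 1 : c is interior
      have hμpos : 0 < μ := by linarith
      have hc' : (1 / μ) • zs + ((μ - 1) / μ) • b = c := by
        rw [hz']
        match_scalars <;> field_simp <;> ring
      have hci : c ∈ interior (convexHull ℝ (P : Set Pt)) := by
        rw [← hc']
        exact hKconv.combo_interior_self_mem_interior hzsi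
          (subset_convexHull ℝ _ (by exact_mod_cast hbP)) (one_div_pos.mpr hμpos)
          (div_nonneg (by linarith) hμpos.le) (by field_simp; ring)
      exact hfoi c (right_mem_segment ℝ b c) hci
  · -- μ < 0 : b is interior
    have h1μ : 0 < 1 - μ := by linarith
    have hb' : (1 / (1 - μ)) • zs + (-μ / (1 - μ)) • c = b := by
      rw [hz']
      match_scalars <;> field_simp <;> ring
    have hbi : b ∈ interior (convexHull ℝ (P : Set Pt)) := by
      rw [← hb']
      exact hKconv.combo_interior_self_mem_interior hzsi
        (subset_convexHull ℝ _ (by exact_mod_cast hcP)) (one_div_pos.mpr h1μ)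
        (div_nonneg (by linarith) h1μ.le) (by field_simp; ring)
    exact hfoi b (left_mem_segment ℝ b c) hbi

lemma pos_edge_tail_unique {P : Finset Pt} (hgp : GenPos P) {u v₁ v₂ : Pt}
    (hu : u ∈ P) (hv₁ : v₁ ∈ P) (hv₂ : v₂ ∈ P) (h1 : u ≠ v₁) (h2 : u ≠ v₂)
    (hp1 : ∀ x ∈ P, 0 ≤ det2 (v₁ - u) (x - u)) (hp2 : ∀ x ∈ P, 0 ≤ det2 (v₂ - u) (x - u)) :
    v₁ = v₂ := by
  by_contra hne
  have d1 := hp1 v₂ hv₂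
  have d2 := hp2 v₁ hv₁
  have hswap : det2 (v₁ - u) (v₂ - u) = -det2 (v₂ - u) (v₁ - u) := by simp [det2]; ring
  exact genpos_det_ne hgp hu hv₁ hv₂ h1 h2 hne (by linarith)

lemma ch_side {P : Finset Pt} {u w : Pt} (hp : ∀ x ∈ P, 0 ≤ det2 (w - u) (x - u)) :
    ∀ z ∈ convexHull ℝ (P : Set Pt), 0 ≤ det2 (w - u) (z - u) := by
  have hconv : Convex ℝ {z : Pt | 0 ≤ det2 (w - u) (z - u)} := by
    intro p hp' q hq' a b ha hb hab
    simp only [Set.mem_setOf_eq] at *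
    have hb' : b = 1 - a := by linarith
    subst hb'
    have e : det2 (w - u) (a • p + (1 - a) • q - u)
        = a * det2 (w - u) (p - u) + (1 - a) * det2 (w - u) (q - u) := by
      simp [det2]; ring
    rw [e]
    have := mul_nonneg ha hp'
    have := mul_nonneg (by linarith : (0:ℝ) ≤ 1 - a) hq'
    linarith
  exact fun z hz => convexHull_min (fun x hx => hp x (by exact_mod_cast hx)) hconv hz

lemma entering_edge_unique {P : Finset Pt} (hgp : GenPos P) {pr pt : Pt} (hd : pt - pr ≠ 0)
    {u₁ w₁ u₂ w₂ : Pt} (hu₁ : u₁ ∈ P) (hw₁ : w₁ ∈ P) (hu₂ : u₂ ∈ P) (hw₂ : w₂ ∈ P)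
    (hne₁ : u₁ ≠ w₁) (hne₂ : u₂ ≠ w₂)
    (hp1 : ∀ x ∈ P, 0 ≤ det2 (w₁ - u₁) (x - u₁)) (hp2 : ∀ x ∈ P, 0 ≤ det2 (w₂ - u₂) (x - u₂))
    (hhu₁ : 0 ≤ det2 (pt - pr) (u₁ - pr)) (hhu₂ : 0 ≤ det2 (pt - pr) (u₂ - pr))
    (hhw₁ : det2 (pt - pr) (w₁ - pr) < 0) (hhw₂ : det2 (pt - pr) (w₂ - pr) < 0) :
    u₁ = u₂ ∧ w₁ = w₂ := by
  have hKconv : Convex ℝ (convexHull ℝ (P : Set Pt)) := convex_convexHull ℝ _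
  -- the crossing points
  have hden₁ : 0 < det2 (pt - pr) (u₁ - pr) - det2 (pt - pr) (w₁ - pr) := by linarith
  have hden₂ : 0 < det2 (pt - pr) (u₂ - pr) - det2 (pt - pr) (w₂ - pr) := by linarith
  obtain ⟨t₁, ht₁⟩ : ∃ t : ℝ, t = det2 (pt - pr) (u₁ - pr) /
      (det2 (pt - pr) (u₁ - pr) - det2 (pt - pr) (w₁ - pr)) := ⟨_, rfl⟩
  obtain ⟨t₂, ht₂⟩ : ∃ t : ℝ, t = det2 (pt - pr) (u₂ - pr) /
      (det2 (pt - pr) (u₂ - pr) - det2 (pt - pr) (w₂ - pr)) := ⟨_, rfl⟩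
  have ht₁0 : 0 ≤ t₁ := by rw [ht₁]; exact div_nonneg hhu₁ hden₁.le
  have ht₂0 : 0 ≤ t₂ := by rw [ht₂]; exact div_nonneg hhu₂ hden₂.le
  have ht₁1 : t₁ < 1 := by rw [ht₁, div_lt_one hden₁]; linarith
  have ht₂1 : t₂ < 1 := by rw [ht₂, div_lt_one hden₂]; linarith
  obtain ⟨W₁, hW₁⟩ : ∃ W : Pt, W = u₁ + t₁ • (w₁ - u₁) := ⟨_, rfl⟩
  obtain ⟨W₂, hW₂⟩ : ∃ W : Pt, W = u₂ + t₂ • (w₂ - u₂) := ⟨_, rfl⟩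
  have hWh : ∀ (u w : Pt) (t : ℝ), t = det2 (pt - pr) (u - pr) /
      (det2 (pt - pr) (u - pr) - det2 (pt - pr) (w - pr)) →
      0 < det2 (pt - pr) (u - pr) - det2 (pt - pr) (w - pr) →
      det2 (pt - pr) (u + t • (w - u) - pr) = 0 := by
    intro u w t ht hden
    have e : det2 (pt - pr) (u + t • (w - u) - pr)
        = det2 (pt - pr) (u - pr) + t * (det2 (pt - pr) (w - pr) - det2 (pt - pr) (u - pr)) := by
      simp [det2]; ring
    rw [e, ht]
    field_simp
    ring
  have hW₁h : det2 (pt - pr) (W₁ - pr) = 0 := by rw [hW₁]; exact hWh _ _ _ ht₁ hden₁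
  have hW₂h : det2 (pt - pr) (W₂ - pr) = 0 := by rw [hW₂]; exact hWh _ _ _ ht₂ hden₂
  obtain ⟨σ₁, hσ₁⟩ := exists_smul_of_det2 hd hW₁h
  obtain ⟨σ₂, hσ₂⟩ := exists_smul_of_det2 hd hW₂h
  have hWCH : ∀ (u w : Pt), u ∈ P → w ∈ P → ∀ t : ℝ, 0 ≤ t → t < 1 →
      u + t • (w - u) ∈ convexHull ℝ (P : Set Pt) := by
    intro u w hu hw t h0 h1
    have hm := hKconv (subset_convexHull ℝ _ (by exact_mod_cast hu))
      (subset_convexHull ℝ _ (by exact_mod_cast hw)) (by linarith : (0:ℝ) ≤ 1 - t) h0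
      (by ring)
    have e : (1 - t) • u + t • w = u + t • (w - u) := by module
    rwa [e] at hm
  have hW₁ch : W₁ ∈ convexHull ℝ (P : Set Pt) := by
    rw [hW₁]; exact hWCH _ _ hu₁ hw₁ _ ht₁0 ht₁1
  have hW₂ch : W₂ ∈ convexHull ℝ (P : Set Pt) := by
    rw [hW₂]; exact hWCH _ _ hu₂ hw₂ _ ht₂0 ht₂1
  -- σ₁ = σ₂
  have hg₁W₂ : 0 ≤ det2 (w₁ - u₁) (W₂ - u₁) := ch_side hp1 _ hW₂ch
  have hg₂W₁ : 0 ≤ det2 (w₂ - u₂) (W₁ - u₂) := ch_side hp2 _ hW₁ch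
  have hdet₁d : det2 (w₁ - u₁) (pt - pr)
      = det2 (pt - pr) (u₁ - pr) - det2 (pt - pr) (w₁ - pr) := by simp [det2]; ring
  have hdet₂d : det2 (w₂ - u₂) (pt - pr)
      = det2 (pt - pr) (u₂ - pr) - det2 (pt - pr) (w₂ - pr) := by simp [det2]; ring
  have hWdiff : W₂ - W₁ = (σ₂ - σ₁) • (pt - pr) := by
    have e1 : W₂ - W₁ = (W₂ - pr) - (W₁ - pr) := by abel
    rw [e1, hσ₁, hσ₂, sub_smul]
  have hexp₁ : det2 (w₁ - u₁) (W₂ - u₁)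
      = det2 (w₁ - u₁) (W₁ - u₁) + det2 (w₁ - u₁) (W₂ - W₁) := by simp [det2]; ring
  have hg₁W₁ : det2 (w₁ - u₁) (W₁ - u₁) = 0 := by
    rw [hW₁]
    have e : u₁ + t₁ • (w₁ - u₁) - u₁ = t₁ • (w₁ - u₁) := by abel
    rw [e]
    simp [det2]; ring
  have hσle₁ : σ₁ ≤ σ₂ := by
    rw [hexp₁, hg₁W₁, hWdiff] at hg₁W₂
    have e : det2 (w₁ - u₁) ((σ₂ - σ₁) • (pt - pr)) = (σ₂ - σ₁) * det2 (w₁ - u₁) (pt - pr) := by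
      simp [det2]; ring
    rw [e, hdet₁d] at hg₁W₂
    nlinarith
  have hexp₂ : det2 (w₂ - u₂) (W₁ - u₂)
      = det2 (w₂ - u₂) (W₂ - u₂) + det2 (w₂ - u₂) (W₁ - W₂) := by simp [det2]; ring
  have hg₂W₂ : det2 (w₂ - u₂) (W₂ - u₂) = 0 := by
    rw [hW₂]
    have e : u₂ + t₂ • (w₂ - u₂) - u₂ = t₂ • (w₂ - u₂) := by abel
    rw [e]
    simp [det2]; ring
  have hσle₂ : σ₂ ≤ σ₁ := by
    have hWdiff' : W₁ - W₂ = (σ₁ - σ₂) • (pt - pr) := by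
      have e1 : W₁ - W₂ = (W₁ - pr) - (W₂ - pr) := by abel
      rw [e1, hσ₁, hσ₂, sub_smul]
    rw [hexp₂, hg₂W₂, hWdiff'] at hg₂W₁
    have e : det2 (w₂ - u₂) ((σ₁ - σ₂) • (pt - pr)) = (σ₁ - σ₂) * det2 (w₂ - u₂) (pt - pr) := by
      simp [det2]; ring
    rw [e, hdet₂d] at hg₂W₁
    nlinarith
  have hWeq : W₁ = W₂ := by
    have hσ : σ₁ = σ₂ := le_antisymm hσle₁ hσle₂
    have : W₁ - pr = W₂ - pr := by rw [hσ₁, hσ₂, hσ]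
    have := congrArg (fun w => w + pr) this
    simpa using this
  -- line of edge 1 determined by zero side-values
  have hcol₁ : ∀ q : Pt, q ∈ P → det2 (w₁ - u₁) (q - u₁) = 0 → q = u₁ ∨ q = w₁ := by
    intro q hq hq0
    by_contra hcon
    push_neg at hcon
    exact genpos_det_ne hgp hu₁ hw₁ hq hne₁ (Ne.symm hcon.1) (Ne.symm hcon.2) hq0
  have hcol₂ : ∀ q : Pt, q ∈ P → det2 (w₂ - u₂) (q - u₂) = 0 → q = u₂ ∨ q = w₂ := by
    intro q hq hq0
    by_contra hcon
    push_neg at hcon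
    exact genpos_det_ne hgp hu₂ hw₂ hq hne₂ (Ne.symm hcon.1) (Ne.symm hcon.2) hq0
  -- main case analysis
  rcases eq_or_lt_of_le ht₁0 with ht₁z | ht₁z
  · rcases eq_or_lt_of_le ht₂0 with ht₂z | ht₂z
    · -- both t zero : W = u₁ = u₂
      have h1 : W₁ = u₁ := by rw [hW₁, ← ht₁z]; simp
      have h2 : W₂ = u₂ := by rw [hW₂, ← ht₂z]; simp
      have hu12 : u₁ = u₂ := by rw [← h1, ← h2, hWeq]
      refine ⟨hu12, ?_⟩
      subst hu12
      exact pos_edge_tail_unique hgp hu₁ hw₁ hw₂ hne₁ hne₂ hp1 hp2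
    · -- t₂ > 0 : u₁ = W₁ = W₂ lies on edge 2's line
      have hW₁u : W₁ = u₁ := by rw [hW₁, ← ht₁z]; simp
      have hg₂u₁ : det2 (w₂ - u₂) (u₁ - u₂) = 0 := by
        rw [← hW₁u, hWeq]; exact hg₂W₂
      rcases hcol₂ u₁ hu₁ hg₂u₁ with h | h
      · subst h
        exact ⟨rfl, pos_edge_tail_unique hgp hu₁ hw₁ hw₂ hne₁ hne₂ hp1 hp2⟩
      · exfalso; rw [h] at hhu₁; linarith
  · -- t₁ > 0 : derive g₁ u₂ = 0, so u₂ = u₁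
    have hWexp : det2 (w₁ - u₁) (W₂ - u₁)
        = (1 - t₂) * det2 (w₁ - u₁) (u₂ - u₁) + t₂ * det2 (w₁ - u₁) (w₂ - u₁) := by
      rw [hW₂]; simp [det2]; ring
    have hgW₂0 : det2 (w₁ - u₁) (W₂ - u₁) = 0 := by rw [← hWeq]; exact hg₁W₁
    have hgu₂ : 0 ≤ det2 (w₁ - u₁) (u₂ - u₁) := hp1 u₂ hu₂
    have hgw₂ : 0 ≤ det2 (w₁ - u₁) (w₂ - u₁) := hp1 w₂ hw₂
    have hg₁u₂ : det2 (w₁ - u₁) (u₂ - u₁) = 0 := by nlinarith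
    rcases hcol₁ u₂ hu₂ hg₁u₂ with h | h
    · have hu12 : u₁ = u₂ := h.symm
      refine ⟨hu12, ?_⟩
      subst hu12
      exact pos_edge_tail_unique hgp hu₁ hw₁ hw₂ hne₁ hne₂ hp1 hp2
    · exfalso; rw [h] at hhu₂; linarith

lemma mem_cutSet_iff {P : Finset Pt} {pr pt q : Pt} :
    q ∈ cutSet P pr pt ↔ q ∈ hullVx P ∧ det2 (pt - pr) (q - pr) < 0 := by
  constructor
  · intro h
    obtain ⟨-, h2⟩ := Finset.mem_filter.mp h
    exact ⟨h2.1, h2.2⟩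
  · intro ⟨h1, h2⟩
    exact Finset.mem_filter.mpr ⟨hullVx_mem_P h1, h1, h2⟩

lemma pt_not_mem_cutSet {P : Finset Pt} {pr pt : Pt} : pt ∉ cutSet P pr pt := by
  intro h
  have := (mem_cutSet_iff.mp h).2
  have e : det2 (pt - pr) (pt - pr) = 0 := by simp [det2]; ring
  linarith [this, e.ge]

lemma not_cutSet_sign {P : Finset Pt} {pr pt q : Pt} (hq : q ∈ hullVx P)
    (h : q ∉ cutSet P pr pt) : 0 ≤ det2 (pt - pr) (q - pr) := by
  by_contra hlt
  exact h (mem_cutSet_iff.mpr ⟨hq, by linarith⟩)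

lemma tcPrimeCard_le_hullVx' (P : Finset Pt) (Tc : Finset Tri) (hc : Compatible P Tc) :
    tcPrimeCard P Tc ≤ (hullVx (intPts P)).card := by
  classical
  unfold tcPrimeCard
  refine Finset.card_le_card_of_injOn
    (fun v => if h : ∃ t, t ∈ Tc.filter (fun t => t.2.2 ∈ hullVx (intPts P)) ∧ triVerts t = v
      then h.choose.2.2 else (0 : Pt)) ?_ ?_
  · intro v hv
    obtain ⟨t, ht, htv⟩ := Finset.mem_image.mp hv
    have h : ∃ t, t ∈ Tc.filter (fun t => t.2.2 ∈ hullVx (intPts P)) ∧ triVerts t = v :=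
      ⟨t, ht, htv⟩
    dsimp only
    rw [dif_pos h]
    exact (Finset.mem_filter.mp h.choose_spec.1).2
  · intro v₁ hv₁ v₂ hv₂ heq
    by_contra hne
    obtain ⟨t₁', ht₁', htv₁⟩ := Finset.mem_image.mp (by exact_mod_cast hv₁)
    obtain ⟨t₂', ht₂', htv₂⟩ := Finset.mem_image.mp (by exact_mod_cast hv₂)
    have h1 : ∃ t, t ∈ Tc.filter (fun t => t.2.2 ∈ hullVx (intPts P)) ∧ triVerts t = v₁ :=
      ⟨t₁', ht₁', htv₁⟩
    have h2 : ∃ t, t ∈ Tc.filter (fun t => t.2.2 ∈ hullVx (intPts P)) ∧ triVerts t = v₂ :=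
      ⟨t₂', ht₂', htv₂⟩
    dsimp only at heq
    rw [dif_pos h1, dif_pos h2] at heq
    have hm1 := Finset.mem_filter.mp h1.choose_spec.1
    have hm2 := Finset.mem_filter.mp h2.choose_spec.1
    have hvne : triVerts h1.choose ≠ triVerts h2.choose := by
      rw [h1.choose_spec.2, h2.choose_spec.2]; exact hne
    exact (hc.2 h1.choose hm1.1 h2.choose hm2.1 hvne).2.1 heq

lemma det2_rev_base (b c x : Pt) : det2 (b - c) (x - c) = -det2 (c - b) (x - b) := by
  simp [det2]; ring

lemma tcPrimeCard_le_key (P : Finset Pt) (hgp : GenPos P) {pr pt : Pt}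
    (hpr : pr ∈ hullVx P) (hpt : pt ∈ hullVx P) (hne : pr ≠ pt)
    (Tc : Finset Tri) (hc : Compatible P Tc) :
    tcPrimeCard P Tc ≤
      ((hullVx (intPts P)).filter fun z =>
        z ∈ interior (convexHull ℝ ((P \ cutSet P pr pt : Finset Pt) : Set Pt))).card
      + (cutSet P pr pt).card + 1 := by
  classical
  set F : Finset Tri := Tc.filter (fun t => t.2.2 ∈ hullVx (intPts P)) with hF
  set F₁ : Finset Tri := F.filter
    (fun t => t.2.2 ∈ interior (convexHull ℝ ((P \ cutSet P pr pt : Finset Pt) : Set Pt)))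
    with hF₁
  set F₂ : Finset Tri := F.filter
    (fun t => ¬ t.2.2 ∈ interior (convexHull ℝ ((P \ cutSet P pr pt : Finset Pt) : Set Pt)))
    with hF₂
  have hsplit : F₁ ∪ F₂ = F := Finset.filter_union_filter_not_eq _ F
  have himg : F.image triVerts = F₁.image triVerts ∪ F₂.image triVerts := by
    rw [← hsplit, Finset.image_union]
  have hstep : tcPrimeCard P Tc ≤ (F₁.image triVerts).card + (F₂.image triVerts).card := by
    unfold tcPrimeCard
    rw [← hF, himg]
    exact Finset.card_union_le _ _
  -- bound on F₁ : injection via inward vertices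
  have hbound1 : (F₁.image triVerts).card ≤
      ((hullVx (intPts P)).filter fun z =>
        z ∈ interior (convexHull ℝ ((P \ cutSet P pr pt : Finset Pt) : Set Pt))).card := by
    refine Finset.card_le_card_of_injOn
      (fun v => if h : ∃ t, t ∈ F₁ ∧ triVerts t = v then h.choose.2.2 else (0 : Pt)) ?_ ?_
    · intro v hv
      obtain ⟨t, ht, htv⟩ := Finset.mem_image.mp hv
      have h : ∃ t, t ∈ F₁ ∧ triVerts t = v := ⟨t, ht, htv⟩
      dsimp only
      rw [dif_pos h]
      have hm := Finset.mem_filter.mp h.choose_spec.1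
      exact Finset.mem_filter.mpr ⟨(Finset.mem_filter.mp hm.1).2, hm.2⟩
    · intro v₁ hv₁ v₂ hv₂ heq
      by_contra hvne
      obtain ⟨t₁', ht₁', htv₁⟩ := Finset.mem_image.mp (by exact_mod_cast hv₁)
      obtain ⟨t₂', ht₂', htv₂⟩ := Finset.mem_image.mp (by exact_mod_cast hv₂)
      have h1 : ∃ t, t ∈ F₁ ∧ triVerts t = v₁ := ⟨t₁', ht₁', htv₁⟩
      have h2 : ∃ t, t ∈ F₁ ∧ triVerts t = v₂ := ⟨t₂', ht₂', htv₂⟩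
      dsimp only at heq
      rw [dif_pos h1, dif_pos h2] at heq
      have hm1 := Finset.mem_filter.mp (Finset.mem_filter.mp h1.choose_spec.1).1
      have hm2 := Finset.mem_filter.mp (Finset.mem_filter.mp h2.choose_spec.1).1
      have hvne' : triVerts h1.choose ≠ triVerts h2.choose := by
        rw [h1.choose_spec.2, h2.choose_spec.2]; exact hvne
      exact (hc.2 h1.choose hm1.1 h2.choose hm2.1 hvne').2.1 heq
  -- key properties of triangles in F₂
  have hkey : ∀ t ∈ F₂, ∃ a b : Pt,
      ((a = t.1 ∧ b = t.2.1) ∨ (a = t.2.1 ∧ b = t.1)) ∧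
      a ∈ hullVx P ∧ b ∈ hullVx P ∧ a ≠ b ∧
      (∀ x ∈ P, 0 ≤ det2 (b - a) (x - a)) ∧ (a ∈ cutSet P pr pt ∨ b ∈ cutSet P pr pt) ∧
      ((if (∀ x ∈ P, 0 ≤ det2 (t.2.1 - t.1) (x - t.1))
        then (if t.1 ∈ cutSet P pr pt then t.1 else pt)
        else (if t.2.1 ∈ cutSet P pr pt then t.2.1 else pt))
       = (if a ∈ cutSet P pr pt then a else pt)) := by
    intro t ht
    have htTc : t ∈ Tc := (Finset.mem_filter.mp (Finset.mem_filter.mp ht).1).1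
    have hgood := hc.1 t htTc
    obtain ⟨hbV, hcV, hbc, hfr⟩ := hgood.1.1
    have htouch : t.1 ∈ cutSet P pr pt ∨ t.2.1 ∈ cutSet P pr pt := by
      by_contra hcon
      push_neg at hcon
      refine hgood.2.2 ⟨pr, hpr, pt, hpt, hne, hcon.1, hcon.2, ?_⟩
      exact (Finset.mem_filter.mp ht).2
    by_cases hposc : ∀ x ∈ P, 0 ≤ det2 (t.2.1 - t.1) (x - t.1)
    · exact ⟨t.1, t.2.1, Or.inl ⟨rfl, rfl⟩, hbV, hcV, hbc, hposc, htouch, by rw [if_pos hposc]⟩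
    · refine ⟨t.2.1, t.1, Or.inr ⟨rfl, rfl⟩, hcV, hbV, (Ne.symm hbc), ?_, htouch.symm,
        by rw [if_neg hposc]⟩
      rcases hulledge_side hgp ⟨hbV, hcV, hbc, hfr⟩ with hl | hr
      · exact absurd hl hposc
      · intro x hx
        rw [det2_rev_base]
        linarith [hr x hx]
  -- bound on F₂ : injection into insert pt S
  have hbound2 : (F₂.image triVerts).card ≤ (cutSet P pr pt).card + 1 := by
    have hcard : (insert pt (cutSet P pr pt)).card ≤ (cutSet P pr pt).card + 1 :=
      Finset.card_insert_le _ _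
    refine le_trans (Finset.card_le_card_of_injOn
      (fun v => if h : ∃ t, t ∈ F₂ ∧ triVerts t = v then
        (if (∀ x ∈ P, 0 ≤ det2 (h.choose.2.1 - h.choose.1) (x - h.choose.1))
         then (if h.choose.1 ∈ cutSet P pr pt then h.choose.1 else pt)
         else (if h.choose.2.1 ∈ cutSet P pr pt then h.choose.2.1 else pt))
        else pt) ?_ ?_) hcard
    · intro v hv
      obtain ⟨t, ht, htv⟩ := Finset.mem_image.mp hv
      have h : ∃ t, t ∈ F₂ ∧ triVerts t = v := ⟨t, ht, htv⟩
      dsimp only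
      rw [dif_pos h]
      obtain ⟨a, b, hab, haV, hbV', hne', hpos, htouch, hgv⟩ := hkey h.choose h.choose_spec.1
      rw [hgv]
      by_cases haS : a ∈ cutSet P pr pt
      · rw [if_pos haS]; exact Finset.mem_insert_of_mem haS
      · rw [if_neg haS]; exact Finset.mem_insert_self _ _
    · intro v₁ hv₁ v₂ hv₂ heq
      by_contra hvne
      obtain ⟨t₁', ht₁', htv₁⟩ := Finset.mem_image.mp (by exact_mod_cast hv₁)
      obtain ⟨t₂', ht₂', htv₂⟩ := Finset.mem_image.mp (by exact_mod_cast hv₂)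
      have h1 : ∃ t, t ∈ F₂ ∧ triVerts t = v₁ := ⟨t₁', ht₁', htv₁⟩
      have h2 : ∃ t, t ∈ F₂ ∧ triVerts t = v₂ := ⟨t₂', ht₂', htv₂⟩
      dsimp only at heq
      rw [dif_pos h1, dif_pos h2] at heq
      obtain ⟨a₁, b₁, hab₁, haV₁, hbV₁, hne₁, hpos₁, htouch₁, hgv₁⟩ :=
        hkey h1.choose h1.choose_spec.1
      obtain ⟨a₂, b₂, hab₂, haV₂, hbV₂, hne₂, hpos₂, htouch₂, hgv₂⟩ :=
        hkey h2.choose h2.choose_spec.1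
      rw [hgv₁, hgv₂] at heq
      -- triVerts are distinct
      have hT1 : t₁' = h1.choose ∨ triVerts t₁' = triVerts h1.choose := by
        right; rw [htv₁, h1.choose_spec.2]
      have hTvne : triVerts h1.choose ≠ triVerts h2.choose := by
        rw [h1.choose_spec.2, h2.choose_spec.2]; exact hvne
      have hmem1 : h1.choose ∈ Tc := (Finset.mem_filter.mp (Finset.mem_filter.mp h1.choose_spec.1).1).1
      have hmem2 : h2.choose ∈ Tc := (Finset.mem_filter.mp (Finset.mem_filter.mp h2.choose_spec.1).1).1
      have hNSE : ¬ShareEdge h1.choose h2.choose := (hc.2 _ hmem1 _ hmem2 hTvne).1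
      -- bases must differ as pairs
      have hset₁ : ({a₁, b₁} : Set Pt) = {h1.choose.1, h1.choose.2.1} := by
        rcases hab₁ with ⟨ha, hb⟩ | ⟨ha, hb⟩
        · rw [ha, hb]
        · rw [ha, hb, Set.pair_comm]
      have hset₂ : ({a₂, b₂} : Set Pt) = {h2.choose.1, h2.choose.2.1} := by
        rcases hab₂ with ⟨ha, hb⟩ | ⟨ha, hb⟩
        · rw [ha, hb]
        · rw [ha, hb, Set.pair_comm]
      have hne₁' : h1.choose.1 ≠ h1.choose.2.1 := by
        rcases hab₁ with ⟨ha, hb⟩ | ⟨ha, hb⟩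
        · rw [← ha, ← hb]; exact hne₁
        · rw [← ha, ← hb]; exact (Ne.symm hne₁)
      have hbase : ¬(({a₁, b₁} : Set Pt) = {a₂, b₂}) := by
        intro hEq
        have hpairs : ({h1.choose.1, h1.choose.2.1} : Set Pt)
            = {h2.choose.1, h2.choose.2.1} := by rw [← hset₁, hEq, hset₂]
        have hsub : ({h2.choose.1, h2.choose.2.1} : Set Pt) ⊆ triVerts h2.choose := by
          intro q hq
          rcases hq with rfl | rfl
          · exact Set.mem_insert _ _
          · exact Set.mem_insert_of_mem _ (Set.mem_insert _ _)
        refine hNSE ⟨h1.choose.1, h1.choose.2.1, hne₁', Set.mem_insert _ _,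
          Set.mem_insert_of_mem _ (Set.mem_insert _ _), ?_, ?_⟩
        · exact hsub (hpairs ▸ Set.mem_insert _ _)
        · exact hsub (hpairs ▸ Set.mem_insert_of_mem _ rfl)
      by_cases hS₁ : a₁ ∈ cutSet P pr pt <;> by_cases hS₂ : a₂ ∈ cutSet P pr pt
      · rw [if_pos hS₁, if_pos hS₂] at heq
        subst heq
        have hbeq : b₁ = b₂ := pos_edge_tail_unique hgp (hullVx_mem_P haV₁)
          (hullVx_mem_P hbV₁) (hullVx_mem_P hbV₂) hne₁ hne₂ hpos₁ hpos₂
        exact hbase (by rw [hbeq])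
      · rw [if_pos hS₁, if_neg hS₂] at heq
        rw [heq] at hS₁
        exact pt_not_mem_cutSet hS₁
      · rw [if_neg hS₁, if_pos hS₂] at heq
        rw [← heq] at hS₂
        exact pt_not_mem_cutSet hS₂
      · rw [if_neg hS₁, if_neg hS₂] at heq
        have hbS₁ : b₁ ∈ cutSet P pr pt := htouch₁.resolve_left hS₁
        have hbS₂ : b₂ ∈ cutSet P pr pt := htouch₂.resolve_left hS₂
        obtain ⟨haeq, hbeq⟩ := entering_edge_unique hgp (sub_ne_zero.mpr (Ne.symm hne))
          (hullVx_mem_P haV₁) (hullVx_mem_P hbV₁) (hullVx_mem_P haV₂) (hullVx_mem_P hbV₂)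
          hne₁ hne₂ hpos₁ hpos₂ (not_cutSet_sign haV₁ hS₁) (not_cutSet_sign haV₂ hS₂)
          (mem_cutSet_iff.mp hbS₁).2 (mem_cutSet_iff.mp hbS₂).2
        exact hbase (by rw [haeq, hbeq])
  calc tcPrimeCard P Tc ≤ _ + _ := hstep
  _ ≤ _ := by
      have := hbound1
      have := hbound2
      omega


lemma maxTcPrime_le {P : Finset Pt} {X : ℕ}
    (h : ∀ Tc, MaxCompatible P Tc → tcPrimeCard P Tc ≤ X) : maxTcPrime P ≤ X := by
  apply csSup_le'
  rintro m ⟨Tc, hTc, rfl⟩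
  exact h Tc hTc

lemma hullVx_not_mem_intPts {P : Finset Pt} {p : Pt} (h : p ∈ hullVx P) : p ∉ intPts P := by
  intro hip
  exact (Finset.mem_filter.mp h).2
    (mem_convexHull_erase_of_mem_interior P (Finset.mem_filter.mp hip).2)

end AuxLemmas

/-- Necessary Condition 3 implies Necessary Conditions 1 and 2. -/
theorem nc_three_implies_nc_one_and_two (P : Finset Pt) (hgp : GenPos P)
    (h3 : ((intPts P).card : ℤ) - ((hullVx (intPts P)).card : ℤ) ≥
      ((hullVx P).card : ℤ) - (maxTcPrime P : ℤ)) :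
    (hullVx P).card ≤ (intPts P).card ∧
      ∀ pr ∈ hullVx P, ∀ pt ∈ hullVx P, pr ≠ pt →
        (hullVx (P \ cutSet P pr pt)).card ≤ (intPts P).card + 1 := by
  classical
  constructor
  · have hM : maxTcPrime P ≤ (hullVx (intPts P)).card :=
      maxTcPrime_le (fun Tc hTc => tcPrimeCard_le_hullVx' P Tc hTc.1)
    omega
  · intro pr hpr pt hpt hne
    have hM : maxTcPrime P ≤
        ((hullVx (intPts P)).filter fun z =>
          z ∈ interior (convexHull ℝ ((P \ cutSet P pr pt : Finset Pt) : Set Pt))).card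
        + (cutSet P pr pt).card + 1 :=
      maxTcPrime_le (fun Tc hTc => tcPrimeCard_le_key P hgp hpr hpt hne Tc hTc.1)
    -- abbreviations
    have hSsub : cutSet P pr pt ⊆ hullVx P := by
      intro q hq
      exact (mem_cutSet_iff.mp hq).1
    have hCS : (hullVx P \ cutSet P pr pt).card + (cutSet P pr pt).card = (hullVx P).card := by
      rw [Finset.card_sdiff_of_subset hSsub]
      exact Nat.sub_add_cancel (Finset.card_le_card hSsub)
    have hAK : ((hullVx (intPts P)).filter fun z =>
          z ∈ interior (convexHull ℝ ((P \ cutSet P pr pt : Finset Pt) : Set Pt))).card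
        + ((hullVx (intPts P)).filter fun z =>
          ¬ z ∈ interior (convexHull ℝ ((P \ cutSet P pr pt : Finset Pt) : Set Pt))).card
        = (hullVx (intPts P)).card :=
      Finset.card_filter_add_card_filter_not _
    -- the decomposition of hullVx Q
    have hQsub : hullVx (P \ cutSet P pr pt) ⊆ (hullVx P \ cutSet P pr pt)
        ∪ ((hullVx (intPts P)).filter fun z =>
          ¬ z ∈ interior (convexHull ℝ ((P \ cutSet P pr pt : Finset Pt) : Set Pt))) := by
      intro q hq
      have hqQ : q ∈ P \ cutSet P pr pt := (Finset.mem_filter.mp hq).1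
      have hqP : q ∈ P := (Finset.mem_sdiff.mp hqQ).1
      have hqS : q ∉ cutSet P pr pt := (Finset.mem_sdiff.mp hqQ).2
      by_cases hqv : q ∈ hullVx P
      · exact Finset.mem_union_left _ (Finset.mem_sdiff.mpr ⟨hqv, hqS⟩)
      · have hqi : q ∈ intPts P := mem_intPts_of_not_hullVx hgp hqP hqv
        refine Finset.mem_union_right _ (Finset.mem_filter.mpr ⟨?_, ?_⟩)
        · -- q is a hull vertex of intPts P
          refine Finset.mem_filter.mpr ⟨hqi, ?_⟩
          intro hcon
          refine (Finset.mem_filter.mp hq).2 (convexHull_mono ?_ hcon)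
          intro x hx
          simp only [Finset.coe_erase, Set.mem_diff, Set.mem_singleton_iff] at hx ⊢
          refine ⟨?_, hx.2⟩
          have hxi : x ∈ intPts P := by exact_mod_cast hx.1
          refine Finset.mem_coe.mpr (Finset.mem_sdiff.mpr ⟨(Finset.mem_filter.mp hxi).1, ?_⟩)
          intro hxS
          exact hullVx_not_mem_intPts (hSsub hxS) hxi
        · -- q is not interior to conv Q
          intro hcon
          exact (Finset.mem_filter.mp hq).2
            (mem_convexHull_erase_of_mem_interior _ hcon)
    have hQle : (hullVx (P \ cutSet P pr pt)).card ≤ (hullVx P \ cutSet P pr pt).card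
        + ((hullVx (intPts P)).filter fun z =>
          ¬ z ∈ interior (convexHull ℝ ((P \ cutSet P pr pt : Finset Pt) : Set Pt))).card :=
      le_trans (Finset.card_le_card hQsub) (Finset.card_union_le _ _)
    omega
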